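/- arXiv:1802.03259 — 4 statements merged into one kernel-verified Lean document; each statement's English description precedes it below -/
import Mathlib

section
/- Let S ⊂ ℝ^n be finite with |S| = C(n+r,r), r-generic, and let μ = Σ_{x∈S} μ_x δ_x with all μ_x > 0, with moment vector y. If θ is a polynomial such that the localizing matrix M_r(θ y) is positive semidefinite, then θ(x) ≥ 0 for every x ∈ S. -/
noncomputable section
open Classical Finset Matrix

/-- Multi-indices in `n` variables of total degree at most `r`. -/
abbrev MIdx (n r : ℕ) := {α : Fin n → ℕ // ∑ i, α i ≤ r}

instance MIdx.fintype (n r : ℕ) : Fintype (MIdx n r) := by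
  have h : ∀ a : MIdx n r, ∀ i, a.1 i ≤ r := fun a i =>
    le_trans (Finset.single_le_sum (fun j _ => Nat.zero_le (a.1 j)) (Finset.mem_univ i)) a.2
  have hinj : Function.Injective
      (fun a : MIdx n r => (fun i => (⟨a.1 i, Nat.lt_succ_of_le (h a i)⟩ : Fin (r+1)))) := by
    intro a b hab
    apply Subtype.ext; funext i
    have := congrFun hab i
    simpa [Fin.mk.injEq] using this
  have : Finite (MIdx n r) := Finite.of_injective _ hinj
  exact Fintype.ofFinite _

/-- The monomial `x^α = x₁^{α₁} ⋯ x_n^{α_n}`. -/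
def mono {n : ℕ} (x : Fin n → ℝ) (α : Fin n → ℕ) : ℝ := ∏ i, x i ^ α i

/-- Moments `y_α = ∑_{x ∈ S} μ_x x^α` of the measure `μ = ∑_{x∈S} μ_x δ_x`. -/
def moments {n : ℕ} (S : Finset (Fin n → ℝ)) (μ : (Fin n → ℝ) → ℝ) (α : Fin n → ℕ) : ℝ :=
  ∑ x ∈ S, μ x * mono x α

/-- The localizing matrix `M_r(θ y)(α,β) = ∑_γ θ_γ y_{α+β+γ}`. -/
def locMat (n r : ℕ) (θ : MvPolynomial (Fin n) ℝ) (y : (Fin n → ℕ) → ℝ) :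
    Matrix (MIdx n r) (MIdx n r) ℝ :=
  fun α β => ∑ γ ∈ θ.support, θ.coeff γ * y (fun i => α.1 i + β.1 i + γ i)

/-- The moment matrix `M_r(y)(α,β) = y_{α+β}`. -/
def momMat (n r : ℕ) (y : (Fin n → ℕ) → ℝ) : Matrix (MIdx n r) (MIdx n r) ℝ :=
  fun α β => y (fun i => α.1 i + β.1 i)

/-- `S` is `r`-generic: no nonzero polynomial of degree at most `r` vanishes on all of `S`. -/
def rGeneric {n : ℕ} (S : Finset (Fin n → ℝ)) (r : ℕ) : Prop :=
  ∀ g : MvPolynomial (Fin n) ℝ, g.totalDegree ≤ r →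
    (∀ x ∈ S, MvPolynomial.eval x g = 0) → g = 0
lemma card_MIdx (n r : ℕ) : Fintype.card (MIdx n r) = (n + r).choose r := by
  have e1 : MIdx n r ≃ {β : Fin (n+1) → ℕ // ∑ i, β i = r} :=
  { toFun := fun a => ⟨Fin.cons (r - ∑ i, a.1 i) a.1, by
      have := a.2; rw [Fin.sum_cons]; omega⟩
    invFun := fun b => ⟨fun i => b.1 i.succ, by
      show ∑ i : Fin n, b.1 i.succ ≤ r
      have := b.2; rw [Fin.sum_univ_succ] at this; omega⟩
    left_inv := fun a => by
      apply Subtype.ext; funext i; simp [Fin.cons_succ]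
    right_inv := fun b => by
      apply Subtype.ext; funext i
      refine Fin.cases ?_ ?_ i
      · have := b.2
        rw [Fin.sum_univ_succ] at this
        simp only [Fin.cons_zero]
        omega
      · intro j; simp [Fin.cons_succ] }
  rw [Fintype.card_congr (e1.trans (Sym.equivNatSumOfFintype (Fin (n+1)) r).symm),
    Sym.card_sym_eq_choose]
  simp

lemma mono_add_add {n : ℕ} (x : Fin n → ℝ) (a b g : Fin n → ℕ) :
    mono x (fun i => a i + b i + g i) = mono x a * mono x b * mono x g := by
  simp [mono, pow_add, Finset.prod_mul_distrib]

/-- if `|S| = C(n+r,r)`, `S` is `r`-generic, all weights are positive and the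
localizing matrix `M_r(θ y)` is positive semidefinite, then `θ ≥ 0` on `S`. -/
theorem nonneg_on_S_of_locMat_posSemidef {n r : ℕ} (S : Finset (Fin n → ℝ))
    (hcard : S.card = (n + r).choose r) (hgen : rGeneric S r)
    (μ : (Fin n → ℝ) → ℝ) (hμ : ∀ x ∈ S, 0 < μ x)
    (θ : MvPolynomial (Fin n) ℝ)
    (hpsd : (locMat n r θ (moments S μ)).PosSemidef) :
    ∀ x ∈ S, 0 ≤ MvPolynomial.eval x θ := by
  intro s hs
  -- the evaluation linear map from coefficient vectors to functions on S
  let T : (MIdx n r → ℝ) →ₗ[ℝ] (↥S → ℝ) :=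
    { toFun := fun c x => ∑ a : MIdx n r, c a * mono x.1 a.1
      map_add' := by intro c d; funext x; simp [add_mul, Finset.sum_add_distrib]
      map_smul' := by intro m c; funext x; simp [Finset.mul_sum, mul_assoc] }
  have hTapp : ∀ (c : MIdx n r → ℝ) (x : ↥S), T c x = ∑ a : MIdx n r, c a * mono x.1 a.1 :=
    fun c x => rfl
  -- the polynomial associated to a coefficient vector
  have hpoly : ∀ (c : MIdx n r → ℝ) (x : Fin n → ℝ),
      MvPolynomial.eval x (∑ a : MIdx n r,
        MvPolynomial.monomial (Finsupp.equivFunOnFinite.symm a.1) (c a))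
      = ∑ a : MIdx n r, c a * mono x a.1 := by
    intro c x
    rw [map_sum]
    refine Finset.sum_congr rfl fun a _ => ?_
    rw [MvPolynomial.eval_monomial, Finsupp.prod_fintype]
    · simp [mono, Finsupp.equivFunOnFinite]
    · intro i; exact pow_zero _
  have hinjT : Function.Injective T := by
    rw [injective_iff_map_eq_zero]
    intro c hc
    have hg : (∑ a : MIdx n r,
        MvPolynomial.monomial (Finsupp.equivFunOnFinite.symm a.1) (c a)) = 0 := by
      refine hgen _ ?_ ?_
      · refine MvPolynomial.totalDegree_finsetSum_le fun a _ => ?_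
        refine (MvPolynomial.totalDegree_monomial_le _ _).trans ?_
        rw [Finsupp.sum_fintype]
        · simpa using a.2
        · intro; rfl
      · intro x hx
        rw [hpoly]
        have := congrFun hc ⟨x, hx⟩
        rw [hTapp] at this
        simpa using this
    funext a
    have hco := congrArg (MvPolynomial.coeff (Finsupp.equivFunOnFinite.symm a.1)) hg
    rw [MvPolynomial.coeff_sum] at hco
    have h2 : ∀ b : MIdx n r,
        (Finsupp.equivFunOnFinite.symm b.1 = Finsupp.equivFunOnFinite.symm a.1) ↔ b = a := by
      intro b
      rw [EmbeddingLike.apply_eq_iff_eq]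
      exact ⟨fun h => Subtype.ext h, fun h => by rw [h]⟩
    simp only [MvPolynomial.coeff_monomial, h2, Finset.sum_ite_eq' Finset.univ a,
      Finset.mem_univ, if_true, MvPolynomial.coeff_zero] at hco
    simpa using hco
  have hrank : Module.finrank ℝ (MIdx n r → ℝ) = Module.finrank ℝ (↥S → ℝ) := by
    rw [Module.finrank_pi, Module.finrank_pi, card_MIdx, Fintype.card_coe, hcard]
  have hsurjT : Function.Surjective T := by
    intro v
    obtain ⟨c, hc⟩ := (T.linearEquivOfInjective hinjT hrank).surjective v
    exact ⟨c, by rw [← T.linearEquivOfInjective_apply hinjT hrank]; exact hc⟩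
  obtain ⟨c, hc⟩ := hsurjT (fun x => if x.1 = s then 1 else 0)
  have hTc : ∀ x ∈ S, (∑ a : MIdx n r, c a * mono x a.1) = if x = s then 1 else 0 := by
    intro x hx
    have := congrFun hc ⟨x, hx⟩
    rw [hTapp] at this
    simpa using this
  -- entries of localizing matrix via evaluation
  have hM : ∀ α β : MIdx n r, locMat n r θ (moments S μ) α β
      = ∑ x ∈ S, μ x * MvPolynomial.eval x θ * (mono x α.1 * mono x β.1) := by
    intro α β
    unfold locMat moments
    simp only [Finset.mul_sum]
    rw [Finset.sum_comm]
    refine Finset.sum_congr rfl fun x hx => ?_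
    rw [MvPolynomial.eval_eq']
    simp only [Finset.mul_sum, Finset.sum_mul]
    refine Finset.sum_congr rfl fun γ hγ => ?_
    rw [mono_add_add]
    simp only [mono]
    ring
  -- quadratic form identity
  have hquad : dotProduct c ((locMat n r θ (moments S μ)) *ᵥ c)
      = ∑ x ∈ S, μ x * MvPolynomial.eval x θ * (∑ a : MIdx n r, c a * mono x a.1) ^ 2 := by
    have expand : ∀ x : Fin n → ℝ, (∑ a : MIdx n r, c a * mono x a.1) ^ 2
        = ∑ a : MIdx n r, ∑ b : MIdx n r, (c a * mono x a.1) * (c b * mono x b.1) := by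
      intro x; rw [sq, Finset.sum_mul_sum]
    simp only [dotProduct, mulVec, hM, expand, Finset.sum_mul, Finset.mul_sum]
    rw [Finset.sum_congr rfl fun α (_ : α ∈ Finset.univ) => Finset.sum_comm, Finset.sum_comm]
    refine Finset.sum_congr rfl fun x hx => ?_
    rw [Finset.sum_comm]
    refine Finset.sum_congr rfl fun a _ => ?_
    refine Finset.sum_congr rfl fun b _ => ?_
    ring
  have h0 : (0:ℝ) ≤ dotProduct c ((locMat n r θ (moments S μ)) *ᵥ c) := by
    simpa using hpsd.dotProduct_mulVec_nonneg c
  rw [hquad] at h0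
  have hsum : ∑ x ∈ S, μ x * MvPolynomial.eval x θ * (∑ a : MIdx n r, c a * mono x a.1) ^ 2
      = μ s * MvPolynomial.eval s θ := by
    rw [Finset.sum_congr rfl fun x hx => by rw [hTc x hx]]
    rw [Finset.sum_eq_single_of_mem s hs]
    · rw [if_pos rfl]; ring
    · intro x _ hxs
      rw [if_neg hxs]
      ring
  rw [hsum] at h0
  exact (mul_nonneg_iff_of_pos_left (hμ s hs)).mp h0
end
end

section
/- If the probability measures μ^i have full support on S_i (μ^i_x > 0 for all x ∈ S_i, i = 1,2), then the sequence of relaxation values τ_r^s(y¹,y²) is nondecreasing, bounded above by τ^s, and converges to τ^s in finitely many steps: there exists r₀ such that τ_r^s(y¹,y²) = τ^s for all r ≥ r₀. -/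
noncomputable section
open Classical Finset Matrix

namespace SepAux

variable {n r : ℕ}

lemma mono_add (x : Fin n → ℝ) (a b : Fin n → ℕ) :
    mono x (fun i => a i + b i) = mono x a * mono x b := by
  simp [mono, pow_add, Finset.prod_mul_distrib]

lemma sum_coeff_mono (p : MvPolynomial (Fin n) ℝ) (hp : p.totalDegree ≤ r) (x : Fin n → ℝ) :
    ∑ α : MIdx n r, p.coeff (Finsupp.equivFunOnFinite.symm α.1) * mono x α.1
      = MvPolynomial.eval x p := by
  classical
  have hinj : Function.Injective (fun α : MIdx n r => Finsupp.equivFunOnFinite.symm α.1) :=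
    fun a b hab => Subtype.ext (Finsupp.equivFunOnFinite.symm.injective hab)
  have h1 : ∑ α : MIdx n r, p.coeff (Finsupp.equivFunOnFinite.symm α.1) * mono x α.1
      = ∑ γ ∈ (Finset.univ.image (fun α : MIdx n r => Finsupp.equivFunOnFinite.symm α.1)),
          p.coeff γ * mono x ⇑γ := by
    rw [Finset.sum_image (fun a _ b _ hab => hinj hab)]
    refine Finset.sum_congr rfl fun α _ => ?_
    congr 1
  have hsub : p.support ⊆
      Finset.univ.image (fun α : MIdx n r => Finsupp.equivFunOnFinite.symm α.1) := by
    intro γ hγ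
    have hdeg : ∑ i, γ i ≤ r := by
      have := MvPolynomial.le_totalDegree hγ
      have hs : γ.sum (fun _ e => e) = ∑ i, γ i := Finsupp.sum_fintype _ _ (fun _ => rfl)
      omega
    refine Finset.mem_image.mpr ⟨⟨⇑γ, hdeg⟩, Finset.mem_univ _, ?_⟩
    simp
  rw [h1, ← Finset.sum_subset hsub (fun γ _ hγ => by
    rw [MvPolynomial.notMem_support_iff.mp hγ, zero_mul])]
  rw [MvPolynomial.eval_eq']
  rfl

lemma locMat_moments (θ : MvPolynomial (Fin n) ℝ) (S : Finset (Fin n → ℝ))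
    (μ : (Fin n → ℝ) → ℝ) (α β : MIdx n r) :
    locMat n r θ (moments S μ) α β
      = ∑ x ∈ S, μ x * MvPolynomial.eval x θ * (mono x α.1 * mono x β.1) := by
  unfold locMat moments
  simp only [Finset.mul_sum]
  rw [Finset.sum_comm]
  refine Finset.sum_congr rfl fun x _ => ?_
  rw [MvPolynomial.eval_eq', Finset.mul_sum, Finset.sum_mul]
  refine Finset.sum_congr rfl fun γ _ => ?_
  have hm : mono x (fun i => α.1 i + β.1 i + γ i)
      = mono x α.1 * mono x β.1 * mono x ⇑γ := by
    rw [show (fun i => α.1 i + β.1 i + γ i)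
        = (fun i => (fun j => α.1 j + β.1 j) i + γ i) from rfl, mono_add, mono_add]
  rw [hm]
  show θ.coeff γ * (μ x * (mono x α.1 * mono x β.1 * mono x ⇑γ))
      = μ x * (θ.coeff γ * ∏ i, x i ^ γ i) * (mono x α.1 * mono x β.1)
  unfold mono
  ring

lemma quadForm (θ : MvPolynomial (Fin n) ℝ) (S : Finset (Fin n → ℝ))
    (μ : (Fin n → ℝ) → ℝ) (u : MIdx n r → ℝ) :
    dotProduct u ((locMat n r θ (moments S μ)) *ᵥ u)
      = ∑ x ∈ S, μ x * MvPolynomial.eval x θ * (∑ α : MIdx n r, u α * mono x α.1)^2 := by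
  have hL : dotProduct u ((locMat n r θ (moments S μ)) *ᵥ u)
      = ∑ α : MIdx n r, ∑ β : MIdx n r, ∑ x ∈ S,
          u α * u β * (μ x * MvPolynomial.eval x θ * (mono x α.1 * mono x β.1)) := by
    simp only [dotProduct, mulVec, locMat_moments, Finset.mul_sum, Finset.sum_mul]
    exact Finset.sum_congr rfl fun α _ => Finset.sum_congr rfl fun β _ =>
      Finset.sum_congr rfl fun x _ => by ring
  rw [hL]
  rw [Finset.sum_congr rfl fun (α : MIdx n r) (_ : α ∈ Finset.univ) =>
    Finset.sum_comm (s := Finset.univ) (t := S)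
      (f := fun β x => u α * u β * (μ x * MvPolynomial.eval x θ * (mono x α.1 * mono x β.1)))]
  rw [Finset.sum_comm]
  refine Finset.sum_congr rfl fun x _ => ?_
  rw [sq, Finset.sum_mul_sum, Finset.mul_sum]
  refine Finset.sum_congr rfl fun α _ => ?_
  rw [Finset.mul_sum]
  exact Finset.sum_congr rfl fun β _ => by ring

lemma locMat_symm (θ : MvPolynomial (Fin n) ℝ) (y : (Fin n → ℕ) → ℝ) (α β : MIdx n r) :
    locMat n r θ y α β = locMat n r θ y β α := by
  unfold locMat
  refine Finset.sum_congr rfl fun γ _ => ?_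
  congr 1
  congr 1
  funext i
  ring

lemma locMat_posSemidef (θ : MvPolynomial (Fin n) ℝ) {S : Finset (Fin n → ℝ)}
    {μ : (Fin n → ℝ) → ℝ} (hμ : ∀ x ∈ S, 0 ≤ μ x)
    (hθ : ∀ x ∈ S, 0 ≤ MvPolynomial.eval x θ) :
    (locMat n r θ (moments S μ)).PosSemidef := by
  refine Matrix.posSemidef_iff_dotProduct_mulVec.mpr ⟨?_, ?_⟩
  · ext α β
    simp only [Matrix.conjTranspose_apply, star_trivial]
    exact locMat_symm θ _ β α
  · intro u
    rw [star_trivial, quadForm]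
    exact Finset.sum_nonneg fun x hx =>
      mul_nonneg (mul_nonneg (hμ x hx) (hθ x hx)) (sq_nonneg _)

lemma exists_interp (S : Finset (Fin n → ℝ)) {x0 : Fin n → ℝ} (hx0 : x0 ∈ S) :
    ∃ p : MvPolynomial (Fin n) ℝ, p.totalDegree ≤ S.card ∧
      MvPolynomial.eval x0 p ≠ 0 ∧ ∀ x ∈ S.erase x0, MvPolynomial.eval x p = 0 := by
  classical
  set q : (Fin n → ℝ) → MvPolynomial (Fin n) ℝ := fun x =>
    if h : ∃ i, x i ≠ x0 i then MvPolynomial.X h.choose - MvPolynomial.C (x h.choose)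
    else 1 with hq
  have hqd : ∀ x, (q x).totalDegree ≤ 1 := by
    intro x
    rw [hq]
    by_cases h : ∃ i, x i ≠ x0 i
    · simp only [dif_pos h]
      refine (MvPolynomial.totalDegree_sub _ _).trans ?_
      simp [MvPolynomial.totalDegree_X, MvPolynomial.totalDegree_C]
    · simp [dif_neg h]
  have hmem : ∀ x ∈ S.erase x0, ∃ i, x i ≠ x0 i := by
    intro x hx
    exact Function.ne_iff.mp (Finset.ne_of_mem_erase hx)
  refine ⟨∏ x ∈ S.erase x0, q x, ?_, ?_, ?_⟩
  · refine (MvPolynomial.totalDegree_finset_prod _ _).trans ?_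
    calc ∑ x ∈ S.erase x0, (q x).totalDegree ≤ (S.erase x0).card * 1 := by
          simpa using Finset.sum_le_card_nsmul _ _ 1 (fun x _ => hqd x)
      _ ≤ S.card := by
          have := Finset.card_erase_le (a := x0) (s := S)
          omega
  · rw [map_prod]
    rw [Finset.prod_ne_zero_iff]
    intro x hx
    have h := hmem x hx
    rw [hq]
    simp only [dif_pos h]
    rw [map_sub, MvPolynomial.eval_X, MvPolynomial.eval_C]
    exact sub_ne_zero.mpr (Ne.symm h.choose_spec)
  · intro x hx
    rw [map_prod]
    refine Finset.prod_eq_zero hx ?_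
    have h := hmem x hx
    rw [hq]
    simp only [dif_pos h]
    rw [map_sub, MvPolynomial.eval_X, MvPolynomial.eval_C, sub_self]

lemma eval_nonneg_of_psd {S : Finset (Fin n → ℝ)} {μ : (Fin n → ℝ) → ℝ}
    (hμ : ∀ x ∈ S, 0 < μ x) {θ : MvPolynomial (Fin n) ℝ} (hr : S.card ≤ r)
    (h : (locMat n r θ (moments S μ)).PosSemidef) {x0 : Fin n → ℝ} (hx0 : x0 ∈ S) :
    0 ≤ MvPolynomial.eval x0 θ := by
  obtain ⟨p, hdeg, hne, hz⟩ := exists_interp S hx0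
  set u : MIdx n r → ℝ := fun α => p.coeff (Finsupp.equivFunOnFinite.symm α.1) with hu
  have h2 := h.dotProduct_mulVec_nonneg u
  rw [star_trivial, quadForm] at h2
  have hsum : ∀ x ∈ S, (∑ α : MIdx n r, u α * mono x α.1) = MvPolynomial.eval x p :=
    fun x _ => sum_coeff_mono p (hdeg.trans hr) x
  rw [Finset.sum_congr rfl (fun x hx => by rw [hsum x hx])] at h2
  rw [← Finset.add_sum_erase _ _ hx0] at h2
  have hz' : ∑ x ∈ S.erase x0,
      μ x * MvPolynomial.eval x θ * (MvPolynomial.eval x p)^2 = 0 :=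
    Finset.sum_eq_zero fun x hx => by rw [hz x hx]; ring
  rw [hz', add_zero] at h2
  have h3 : 0 < (MvPolynomial.eval x0 p)^2 := by positivity
  nlinarith [mul_pos (hμ x0 hx0) h3]

end SepAux

/-- Optimal value (infimum, in the extended reals) of the original separation problem `P^s`
for datasets `S₁`, `S₂`, feasible set `Θ` and objective `f`. -/
def sepVal {n : ℕ} (Θ : Set (MvPolynomial (Fin n) ℝ)) (f : MvPolynomial (Fin n) ℝ → ℝ)
    (S1 S2 : Finset (Fin n → ℝ)) : EReal :=
  sInf ((fun θ => ((f θ : ℝ) : EReal)) ''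
    {θ | θ ∈ Θ ∧ (∀ x ∈ S1, 0 ≤ MvPolynomial.eval x θ) ∧
      (∀ x ∈ S2, MvPolynomial.eval x θ ≤ 0)})

/-- Optimal value (infimum, in the extended reals) of the moment relaxation `P^s_r(y¹,y²)`. -/
def relaxVal {n : ℕ} (Θ : Set (MvPolynomial (Fin n) ℝ)) (f : MvPolynomial (Fin n) ℝ → ℝ)
    (r : ℕ) (y1 y2 : (Fin n → ℕ) → ℝ) : EReal :=
  sInf ((fun θ => ((f θ : ℝ) : EReal)) ''
    {θ | θ ∈ Θ ∧ (locMat n r θ y1).PosSemidef ∧ (locMat n r (-θ) y2).PosSemidef})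
/-- if the probability measures `μ^i` have full support on `S_i`, then the
relaxation values are nondecreasing in `r`, bounded above by `τ^s`, and converge to `τ^s`
in finitely many steps. -/
theorem relaxVal_finite_convergence {n d : ℕ} (S1 S2 : Finset (Fin n → ℝ))
    (Θ : Set (MvPolynomial (Fin n) ℝ)) (hΘ : ∀ θ ∈ Θ, θ.totalDegree ≤ d)
    (f : MvPolynomial (Fin n) ℝ → ℝ)
    (μ1 μ2 : (Fin n → ℝ) → ℝ)
    (hμ1 : ∀ x ∈ S1, 0 < μ1 x) (hμ1sum : ∑ x ∈ S1, μ1 x = 1)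
    (hμ2 : ∀ x ∈ S2, 0 < μ2 x) (hμ2sum : ∑ x ∈ S2, μ2 x = 1) :
    (∀ r : ℕ, relaxVal Θ f r (moments S1 μ1) (moments S2 μ2)
        ≤ relaxVal Θ f (r + 1) (moments S1 μ1) (moments S2 μ2))
      ∧ (∀ r : ℕ, relaxVal Θ f r (moments S1 μ1) (moments S2 μ2) ≤ sepVal Θ f S1 S2)
      ∧ ∃ r0 : ℕ, ∀ r ≥ r0,
          relaxVal Θ f r (moments S1 μ1) (moments S2 μ2) = sepVal Θ f S1 S2 := by
  classical
  set y1 := moments S1 μ1 with hy1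
  set y2 := moments S2 μ2 with hy2
  have hBA : ∀ r : ℕ,
      {θ | θ ∈ Θ ∧ (∀ x ∈ S1, 0 ≤ MvPolynomial.eval x θ) ∧
        (∀ x ∈ S2, MvPolynomial.eval x θ ≤ 0)}
      ⊆ {θ | θ ∈ Θ ∧ (locMat n r θ y1).PosSemidef ∧ (locMat n r (-θ) y2).PosSemidef} := by
    rintro r θ ⟨h0, h1, h2⟩
    refine ⟨h0, SepAux.locMat_posSemidef θ (fun x hx => (hμ1 x hx).le) h1,
      SepAux.locMat_posSemidef (-θ) (fun x hx => (hμ2 x hx).le) (fun x hx => ?_)⟩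
    rw [map_neg]
    exact neg_nonneg.mpr (h2 x hx)
  have hmono : ∀ r : ℕ,
      {θ | θ ∈ Θ ∧ (locMat n (r+1) θ y1).PosSemidef ∧ (locMat n (r+1) (-θ) y2).PosSemidef}
      ⊆ {θ | θ ∈ Θ ∧ (locMat n r θ y1).PosSemidef ∧ (locMat n r (-θ) y2).PosSemidef} := by
    rintro r θ ⟨h0, h1, h2⟩
    have key : ∀ (ψ : MvPolynomial (Fin n) ℝ) (y : (Fin n → ℕ) → ℝ),
        locMat n r ψ y = (locMat n (r+1) ψ y).submatrix
          (fun α : MIdx n r => (⟨α.1, α.2.trans (Nat.le_succ r)⟩ : MIdx n (r+1)))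
          (fun α : MIdx n r => ⟨α.1, α.2.trans (Nat.le_succ r)⟩) := fun _ _ => rfl
    exact ⟨h0, key θ y1 ▸ h1.submatrix _, key (-θ) y2 ▸ h2.submatrix _⟩
  have hAB : ∀ r : ℕ, max S1.card S2.card ≤ r →
      {θ | θ ∈ Θ ∧ (locMat n r θ y1).PosSemidef ∧ (locMat n r (-θ) y2).PosSemidef}
      ⊆ {θ | θ ∈ Θ ∧ (∀ x ∈ S1, 0 ≤ MvPolynomial.eval x θ) ∧
        (∀ x ∈ S2, MvPolynomial.eval x θ ≤ 0)} := by
    rintro r hr θ ⟨h0, h1, h2⟩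
    refine ⟨h0,
      fun x hx => SepAux.eval_nonneg_of_psd hμ1 (le_trans (le_max_left _ _) hr) h1 hx,
      fun x hx => ?_⟩
    have h3 := SepAux.eval_nonneg_of_psd hμ2 (le_trans (le_max_right _ _) hr) h2 hx
    rw [map_neg] at h3
    linarith
  refine ⟨fun r => sInf_le_sInf (Set.image_mono (hmono r)),
    fun r => sInf_le_sInf (Set.image_mono (hBA r)),
    max S1.card S2.card, fun r hr => ?_⟩
  unfold relaxVal sepVal
  rw [Set.Subset.antisymm (hAB r hr) (hBA r)]
end
end

section
/- If the main iterative algorithm terminates at iteration K (i.e., the set of outside points O^K is empty), then the returned polynomial θ_K is an optimal solution of the original separation problem P^s, and τ^s = τ_r^s(μ_K¹, μ_K²) = τ^s(S₁^K, S₂^K). -/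
noncomputable section
open Classical Finset Matrix

/-- The uniform probability weight vector on the finite set `A`. -/
def uniformOn {n : ℕ} (A : Finset (Fin n → ℝ)) : (Fin n → ℝ) → ℝ :=
  fun x => if x ∈ A then (A.card : ℝ)⁻¹ else 0

lemma locMat_moments_entry {n r : ℕ} (S : Finset (Fin n → ℝ)) (μ : (Fin n → ℝ) → ℝ)
    (θ : MvPolynomial (Fin n) ℝ) (α β : MIdx n r) :
    locMat n r θ (moments S μ) α β
      = ∑ x ∈ S, μ x * MvPolynomial.eval x θ * (mono x α.1 * mono x β.1) := by
  unfold locMat moments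
  simp only [Finset.mul_sum]
  rw [Finset.sum_comm]
  refine Finset.sum_congr rfl fun x _ => ?_
  rw [MvPolynomial.eval_eq, Finset.mul_sum, Finset.sum_mul]
  refine Finset.sum_congr rfl fun γ _ => ?_
  have hsup : ∏ i ∈ γ.support, x i ^ γ i = ∏ i : Fin n, x i ^ γ i :=
    Finset.prod_subset (Finset.subset_univ _)
      (fun i _ hi => by simp [Finsupp.notMem_support_iff.mp hi])
  unfold mono
  simp only [pow_add, Finset.prod_mul_distrib, hsup]
  ring

lemma psd_locMat {n r : ℕ} (S : Finset (Fin n → ℝ)) (μ : (Fin n → ℝ) → ℝ)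
    (hμ : ∀ x ∈ S, 0 ≤ μ x) (θ : MvPolynomial (Fin n) ℝ)
    (hθ : ∀ x ∈ S, 0 ≤ MvPolynomial.eval x θ) :
    (locMat n r θ (moments S μ)).PosSemidef := by
  refine Matrix.posSemidef_iff_dotProduct_mulVec.mpr ⟨?_, ?_⟩
  · ext α β
    simp only [Matrix.conjTranspose_apply, star_trivial, locMat_moments_entry]
    exact Finset.sum_congr rfl fun x _ => by ring
  · intro z
    have key : star z ⬝ᵥ (locMat n r θ (moments S μ)) *ᵥ z
        = ∑ x ∈ S, μ x * MvPolynomial.eval x θ * (∑ α : MIdx n r, z α * mono x α.1)^2 := by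
      simp only [dotProduct, Matrix.mulVec, dotProduct, star_trivial,
        locMat_moments_entry]
      have expand : ∀ x ∈ S, μ x * MvPolynomial.eval x θ * (∑ α : MIdx n r, z α * mono x α.1)^2
          = ∑ α : MIdx n r, ∑ β : MIdx n r,
              z α * (μ x * MvPolynomial.eval x θ * (mono x α.1 * mono x β.1)) * z β := by
        intro x _
        rw [sq, Finset.sum_mul_sum, Finset.mul_sum]
        refine Finset.sum_congr rfl fun α _ => ?_
        rw [Finset.mul_sum]
        refine Finset.sum_congr rfl fun β _ => ?_
        ring
      rw [Finset.sum_congr rfl expand, Finset.sum_comm]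
      refine Finset.sum_congr rfl fun α _ => ?_
      rw [Finset.sum_comm, Finset.mul_sum]
      refine Finset.sum_congr rfl fun β _ => ?_
      rw [Finset.sum_mul, Finset.mul_sum]
      exact Finset.sum_congr rfl fun x _ => by ring
    rw [key]
    exact Finset.sum_nonneg fun x hx =>
      mul_nonneg (mul_nonneg (hμ x hx) (hθ x hx)) (sq_nonneg _)

lemma uniformOn_nonneg {n : ℕ} (A : Finset (Fin n → ℝ)) (x : Fin n → ℝ) :
    0 ≤ uniformOn A x := by
  unfold uniformOn
  split <;> positivity

/-- if the main algorithm terminates at iteration `K` (the set of outside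
points is empty), then the returned polynomial `θ_K` is an optimal solution of the original
separation problem `P^s`, and `τ^s = τ^s_r(μ_K¹,μ_K²) = τ^s(S₁^K, S₂^K)`. -/
theorem algorithm_termination_optimal {n r : ℕ} (S1 S2 S1K S2K : Finset (Fin n → ℝ))
    (hK1 : S1K ⊆ S1) (hK2 : S2K ⊆ S2) (hne1 : S1K.Nonempty) (hne2 : S2K.Nonempty)
    (Θ : Set (MvPolynomial (Fin n) ℝ)) (f : MvPolynomial (Fin n) ℝ → ℝ)
    (θK : MvPolynomial (Fin n) ℝ)
    -- θ_K is an optimal solution of the relaxation P^s_r(y_K¹, y_K²):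
    (hfeas : θK ∈ Θ ∧ (locMat n r θK (moments S1K (uniformOn S1K))).PosSemidef
      ∧ (locMat n r (-θK) (moments S2K (uniformOn S2K))).PosSemidef)
    (hopt : ∀ θ ∈ Θ, (locMat n r θ (moments S1K (uniformOn S1K))).PosSemidef →
      (locMat n r (-θ) (moments S2K (uniformOn S2K))).PosSemidef → f θK ≤ f θ)
    -- termination: the set of outside points O^K is empty:
    (hterm1 : ∀ x ∈ S1, 0 ≤ MvPolynomial.eval x θK)
    (hterm2 : ∀ x ∈ S2, MvPolynomial.eval x θK ≤ 0) :
    ((f θK : ℝ) : EReal) = sepVal Θ f S1 S2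
      ∧ sepVal Θ f S1 S2
          = relaxVal Θ f r (moments S1K (uniformOn S1K)) (moments S2K (uniformOn S2K))
      ∧ relaxVal Θ f r (moments S1K (uniformOn S1K)) (moments S2K (uniformOn S2K))
          = sepVal Θ f S1K S2K := by
  set A : EReal := ((f θK : ℝ) : EReal) with hA
  set y1 := moments S1K (uniformOn S1K)
  set y2 := moments S2K (uniformOn S2K)
  -- sepVal S1 S2 ≤ A
  have h1 : sepVal Θ f S1 S2 ≤ A :=
    sInf_le ⟨θK, ⟨hfeas.1, hterm1, hterm2⟩, rfl⟩
  -- sepVal S1K S2K ≤ sepVal S1 S2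
  have h2 : sepVal Θ f S1K S2K ≤ sepVal Θ f S1 S2 := by
    apply sInf_le_sInf
    apply Set.image_mono
    rintro θ ⟨hΘ, ha, hb⟩
    exact ⟨hΘ, fun x hx => ha x (hK1 hx), fun x hx => hb x (hK2 hx)⟩
  -- relaxVal ≤ sepVal S1K S2K
  have h3 : relaxVal Θ f r y1 y2 ≤ sepVal Θ f S1K S2K := by
    apply sInf_le_sInf
    apply Set.image_mono
    rintro θ ⟨hΘ, ha, hb⟩
    refine ⟨hΘ, psd_locMat _ _ (fun x _ => uniformOn_nonneg _ x) _ ha,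
      psd_locMat _ _ (fun x _ => uniformOn_nonneg _ x) _ ?_⟩
    intro x hx
    simpa using hb x hx
  -- A ≤ relaxVal
  have h4 : A ≤ relaxVal Θ f r y1 y2 := by
    apply le_sInf
    rintro b ⟨θ, ⟨hΘ, hp1, hp2⟩, rfl⟩
    show ((f θK : ℝ) : EReal) ≤ ((f θ : ℝ) : EReal)
    exact EReal.coe_le_coe_iff.mpr (hopt θ hΘ hp1 hp2)
  have e1 : A = sepVal Θ f S1 S2 :=
    le_antisymm (le_trans h4 (le_trans h3 h2)) h1
  have e3 : relaxVal Θ f r y1 y2 = sepVal Θ f S1K S2K :=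
    le_antisymm h3 (le_trans h2 (le_trans h1 h4))
  have e2 : relaxVal Θ f r y1 y2 = A :=
    le_antisymm (le_trans h3 (le_trans h2 h1)) h4
  exact ⟨e1, by rw [← e1, e2], e3⟩
end
end

section
/- Any optimal solution (Q*, b*, c*) of the relaxed minimum-volume covering ellipsoid problem (with inequality constraint c ≤ 1 − (1/4) b'Q⁻¹b) satisfies the equality c* = 1 − (1/4) b*'(Q*)⁻¹b*, provided |S| > 1 and S affinely spans ℝ^n; hence it is an optimal solution of the original problem with the equality constraint. -/
noncomputable section
open Matrix

/-- any optimal solution `(Q*, b*, c*)` of the relaxed minimum-volume covering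
ellipsoid problem (with the inequality `c ≤ 1 − (1/4) b'Q⁻¹b`) satisfies the equality
`c* = 1 − (1/4) b*'(Q*)⁻¹ b*`, provided `|S| > 1` and `S` affinely spans `ℝ^n`; hence it is
optimal for the original problem with the equality constraint. -/
theorem mvce_relaxation_exact {n : ℕ} (S : Finset (Fin n → ℝ))
    (hcard : 1 < S.card) (hspan : affineSpan ℝ (S : Set (Fin n → ℝ)) = ⊤)
    (Q : Matrix (Fin n) (Fin n) ℝ) (b : Fin n → ℝ) (c : ℝ)
    (hQ : Q.PosDef)
    (hcover : ∀ x ∈ S, 0 ≤ -(x ⬝ᵥ Q.mulVec x) + b ⬝ᵥ x + c)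
    (hineq : c ≤ 1 - (1 / 4) * (b ⬝ᵥ Q⁻¹.mulVec b))
    (hopt : ∀ (Q' : Matrix (Fin n) (Fin n) ℝ) (b' : Fin n → ℝ) (c' : ℝ),
      Q'.PosDef → (∀ x ∈ S, 0 ≤ -(x ⬝ᵥ Q'.mulVec x) + b' ⬝ᵥ x + c') →
      c' ≤ 1 - (1 / 4) * (b' ⬝ᵥ Q'⁻¹.mulVec b') →
      Q.det ^ (-(1 / 2) : ℝ) ≤ Q'.det ^ (-(1 / 2) : ℝ)) :
    c = 1 - (1 / 4) * (b ⬝ᵥ Q⁻¹.mulVec b) := by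
  classical
  obtain ⟨x1, hx1, x2, hx2, hne⟩ := Finset.one_lt_card.mp hcard
  have hn : n ≠ 0 := by rintro rfl; exact hne (funext fun i => i.elim0)
  set u : Fin n → ℝ := Q⁻¹.mulVec b with hu
  set γ : ℝ := c + (1/4) * (b ⬝ᵥ u) with hγ
  have hdet : IsUnit Q.det := isUnit_iff_ne_zero.mpr hQ.det_pos.ne'
  have hQQi : Q * Q⁻¹ = 1 := Q.mul_nonsing_inv hdet
  have hbu : Q.mulVec u = b := by
    rw [hu, mulVec_mulVec, hQQi, one_mulVec]
  have hT : Qᵀ = Q := hQ.1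
  have hsymm : ∀ v w : Fin n → ℝ, v ⬝ᵥ Q.mulVec w = w ⬝ᵥ Q.mulVec v := by
    intro v w
    rw [dotProduct_mulVec, dotProduct_comm, ← mulVec_transpose, hT]
  -- key quadratic identity
  have key : ∀ x : Fin n → ℝ,
      (x - (1/2 : ℝ) • u) ⬝ᵥ Q.mulVec (x - (1/2 : ℝ) • u)
        = x ⬝ᵥ Q.mulVec x - b ⬝ᵥ x + (1/4) * (b ⬝ᵥ u) := by
    intro x
    have h1 : u ⬝ᵥ Q.mulVec x = b ⬝ᵥ x := by
      rw [hsymm u x, hbu, dotProduct_comm]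
    have h2 : u ⬝ᵥ Q.mulVec u = b ⬝ᵥ u := by rw [hbu, dotProduct_comm]
    have h3 : x ⬝ᵥ Q.mulVec u = b ⬝ᵥ x := by rw [hbu, dotProduct_comm]
    simp only [mulVec_sub, mulVec_smul, sub_dotProduct, dotProduct_sub,
      smul_dotProduct, dotProduct_smul, smul_eq_mul, h1, h2, h3]
    ring
  -- each point of S is inside the ball of radius γ
  have hball : ∀ x ∈ S,
      (x - (1/2 : ℝ) • u) ⬝ᵥ Q.mulVec (x - (1/2 : ℝ) • u) ≤ γ := by
    intro x hx
    have := hcover x hx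
    rw [key x]; rw [hγ]; linarith
  -- γ > 0
  have hγpos : 0 < γ := by
    by_contra h
    push_neg at h
    have hzero : ∀ x ∈ S, x = (1/2 : ℝ) • u := by
      intro x hx
      by_contra hxne
      have hy : x - (1/2 : ℝ) • u ≠ 0 := sub_ne_zero.mpr hxne
      have hpos := hQ.dotProduct_mulVec_pos hy
      simp only [star_trivial] at hpos
      exact (lt_irrefl (0:ℝ)) (lt_of_lt_of_le hpos ((hball x hx).trans h))
    exact hne ((hzero x1 hx1).trans (hzero x2 hx2).symm)
  -- by contradiction, assume strict inequality, i.e. γ < 1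
  by_contra hc
  have hγlt : γ < 1 := by
    rcases lt_or_eq_of_le hineq with h | h
    · rw [hγ]; linarith
    · exact absurd h hc
  have hγne : γ ≠ 0 := hγpos.ne'
  -- scaled solution
  set Q' : Matrix (Fin n) (Fin n) ℝ := γ⁻¹ • Q with hQ'
  have hQ'pos : Q'.PosDef := by
    rw [posDef_iff_dotProduct_mulVec]
    constructor
    · show (γ⁻¹ • Q)ᴴ = γ⁻¹ • Q
      rw [conjTranspose_smul, star_trivial, hQ.1.eq]
    · intro x hx
      have := hQ.dotProduct_mulVec_pos hx
      simp only [star_trivial] at this ⊢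
      rw [hQ', smul_mulVec, dotProduct_smul, smul_eq_mul]
      exact mul_pos (inv_pos.mpr hγpos) this
  have hQ'inv : Q'⁻¹ = γ • Q⁻¹ := by
    apply inv_eq_right_inv
    rw [hQ', Matrix.smul_mul, Matrix.mul_smul, smul_smul, inv_mul_cancel₀ hγne,
      one_smul, hQQi]
  have hcover' : ∀ x ∈ S, 0 ≤ -(x ⬝ᵥ Q'.mulVec x) + (γ⁻¹ • b) ⬝ᵥ x + γ⁻¹ * c := by
    intro x hx
    have h0 := hcover x hx
    rw [hQ', smul_mulVec, dotProduct_smul, smul_dotProduct]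
    simp only [smul_eq_mul]
    have h1 : -(γ⁻¹ * (x ⬝ᵥ Q.mulVec x)) + γ⁻¹ * (b ⬝ᵥ x) + γ⁻¹ * c
        = γ⁻¹ * (-(x ⬝ᵥ Q.mulVec x) + b ⬝ᵥ x + c) := by ring
    rw [h1]
    exact mul_nonneg (inv_pos.mpr hγpos).le h0
  have hineq' : γ⁻¹ * c ≤ 1 - (1/4) * ((γ⁻¹ • b) ⬝ᵥ Q'⁻¹.mulVec (γ⁻¹ • b)) := by
    rw [hQ'inv]
    have hγγ : γ⁻¹ * γ = 1 := inv_mul_cancel₀ hγne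
    have hval : (γ⁻¹ • b) ⬝ᵥ (γ • Q⁻¹).mulVec (γ⁻¹ • b) = γ⁻¹ * (b ⬝ᵥ u) := by
      rw [mulVec_smul, smul_mulVec, ← hu, dotProduct_smul, dotProduct_smul,
        smul_dotProduct]
      simp only [smul_eq_mul]
      field_simp
    rw [hval]
    have h2 : γ⁻¹ * c + γ⁻¹ * ((1/4) * (b ⬝ᵥ u)) = γ⁻¹ * γ := by rw [hγ]; ring
    nlinarith [h2, hγγ]
  have hle := hopt Q' (γ⁻¹ • b) (γ⁻¹ * c) hQ'pos hcover' hineq'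
  -- compute determinant of Q'
  have hdet' : Q'.det = γ⁻¹ ^ n * Q.det := by
    rw [hQ', det_smul, Fintype.card_fin]
  have hd : (0:ℝ) < Q.det := hQ.det_pos
  have hpow : (1:ℝ) < γ⁻¹ ^ n := one_lt_pow₀ ((one_lt_inv₀ hγpos).2 hγlt) hn
  have hrhs : Q'.det ^ (-(1/2) : ℝ)
      = (γ⁻¹ ^ n) ^ (-(1/2) : ℝ) * Q.det ^ (-(1/2) : ℝ) := by
    rw [hdet', Real.mul_rpow (by positivity) hd.le]
  have hlt1 : (γ⁻¹ ^ n) ^ (-(1/2) : ℝ) < 1 :=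
    Real.rpow_lt_one_of_one_lt_of_neg hpow (by norm_num)
  have hdpos : (0:ℝ) < Q.det ^ (-(1/2) : ℝ) := Real.rpow_pos_of_pos hd _
  nlinarith [hle, hrhs, hlt1, hdpos]
end
end
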